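/- For any positive semidefinite matrix ρ^{XY} on a tensor product of finite-dimensional Hilbert spaces X and Y, the squared Schatten-2 norms satisfy |X|^{-1}·‖ρ^Y‖₂² ≤ ‖ρ^{XY}‖₂² ≤ |X|·‖ρ^Y‖₂², where ρ^Y is the partial trace over X. -/

import Mathlib

open Matrix MeasureTheory
open scoped ComplexOrder BigOperators

noncomputable section

variable {n : Type*} [Fintype n] [DecidableEq n]

/-- Frobenius / Schatten-2 norm. -/
def frob (M : Matrix n n ℂ) : ℝ := Real.sqrt (Mᴴ * M).trace.re

/-- The old `Matrix.PosSemidef.sqrt` (removed from Mathlib), with its old definition. -/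
def psdSqrt {A : Matrix n n ℂ} (hA : A.PosSemidef) : Matrix n n ℂ :=
  (hA.1.eigenvectorUnitary : Matrix n n ℂ) *
    Matrix.diagonal ((↑) ∘ (fun x : ℝ => Real.sqrt x) ∘ hA.1.eigenvalues) *
    (star hA.1.eigenvectorUnitary : Matrix n n ℂ)

/-- Trace / Schatten-1 norm. -/
def trNorm (M : Matrix n n ℂ) : ℝ :=
  (psdSqrt (Matrix.posSemidef_conjTranspose_mul_self M)).trace.re

/-- Real power of a Hermitian matrix via the spectral decomposition, sending zero
eigenvalues to zero (hence Moore–Penrose pseudoinverse powers for negative exponents);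
junk value `0` for non-Hermitian input. -/
def mpow (M : Matrix n n ℂ) (r : ℝ) : Matrix n n ℂ :=
  if h : M.IsHermitian then
    (h.eigenvectorUnitary : Matrix n n ℂ) *
      Matrix.diagonal (fun i =>
        ((if h.eigenvalues i = 0 then (0:ℝ) else h.eigenvalues i ^ r : ℝ) : ℂ)) *
      (h.eigenvectorUnitary : Matrix n n ℂ)ᴴ
  else 0

/-- Operator (Schatten-∞) norm. -/
def opNorm (M : Matrix n n ℂ) : ℝ := ‖(Matrix.toEuclideanLin M).toContinuousLinearMap‖

/-- Support of a matrix, i.e. its range as a linear map. -/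
def supp (M : Matrix n n ℂ) : Submodule ℂ (n → ℂ) := LinearMap.range M.mulVecLin

/-- Rényi-2 divergence (base 2). -/
def D2 (α β : Matrix n n ℂ) : ℝ :=
  2 * Real.logb 2 (frob (mpow β (-(1/4)) * α * mpow β (-(1/4))))

/-- Max (Rényi-∞) divergence (base 2). -/
def Dinf (α β : Matrix n n ℂ) : ℝ :=
  Real.logb 2 (opNorm (mpow β (-(1/2)) * α * mpow β (-(1/2))))

/-- Kronecker / tensor product of square matrices, on the product index type. -/
def kron {m : Type*} (P : Matrix n n ℂ) (Q : Matrix m m ℂ) : Matrix (n × m) (n × m) ℂ :=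
  fun z w => P z.1 w.1 * Q z.2 w.2

/-- Partial trace over the first tensor factor. -/
def ptrFst {X Y : Type*} [Fintype X] (ρ : Matrix (X × Y) (X × Y) ℂ) : Matrix Y Y ℂ :=
  fun j j' => ∑ i, ρ (i, j) (i, j')

lemma trace_re' {n : Type*} [Fintype n] (M : Matrix n n ℂ) :
    (Mᴴ * M).trace.re = ∑ z, ∑ w, Complex.normSq (M w z) := by
  simp [Matrix.trace, Matrix.mul_apply, Matrix.conjTranspose_apply, Matrix.diag,
    Complex.conj_mul', Complex.re_sum, Complex.normSq_eq_norm_sq, ← Complex.ofReal_pow]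

lemma frob_sq' {n : Type*} [Fintype n] [DecidableEq n] (M : Matrix n n ℂ) :
    frob M ^ 2 = ∑ z, ∑ w, Complex.normSq (M w z) := by
  rw [frob, Real.sq_sqrt, trace_re']
  rw [trace_re']
  exact Finset.sum_nonneg fun z _ => Finset.sum_nonneg fun w _ => Complex.normSq_nonneg _

lemma normSq_sum_le' {X : Type*} [Fintype X] (f : X → ℂ) :
    Complex.normSq (∑ i, f i) ≤ (Fintype.card X : ℝ) * ∑ i, Complex.normSq (f i) := by
  have h1 : ‖∑ i, f i‖ ≤ ∑ i, ‖f i‖ := norm_sum_le _ _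
  have h2 : (∑ i, ‖f i‖)^2 ≤ ((Finset.univ : Finset X).card : ℝ) * ∑ i, ‖f i‖^2 :=
    sq_sum_le_card_mul_sum_sq
  calc Complex.normSq (∑ i, f i) ≤ (∑ i, ‖f i‖)^2 := by
        rw [Complex.normSq_eq_norm_sq]
        exact pow_le_pow_left₀ (norm_nonneg _) h1 2
    _ ≤ (Fintype.card X : ℝ) * ∑ i, ‖f i‖^2 := by simpa [Finset.card_univ] using h2
    _ = (Fintype.card X : ℝ) * ∑ i, Complex.normSq (f i) := by
        simp [Complex.normSq_eq_norm_sq]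

lemma traceT' {K : Type*} [Fintype K] (B N : Matrix K K ℂ) :
    ((Bᴴ * B) * N).trace = ∑ k, star (star (B k)) ⬝ᵥ (N *ᵥ star (B k)) := by
  rw [Matrix.mul_assoc, Matrix.trace_mul_comm]
  simp only [Matrix.trace, Matrix.diag, Matrix.mul_apply, Matrix.conjTranspose_apply,
    dotProduct, Matrix.mulVec, Pi.star_apply, star_star, Finset.sum_mul,
    Finset.mul_sum]
  congr 1; funext k
  rw [Finset.sum_comm]
  congr 1; funext w
  congr 1; funext z
  ring

lemma quad_eq' {K L : Type*} [Fintype K] [Fintype L] (S : Matrix K L ℂ) (w : L → ℂ) :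
    star w ⬝ᵥ ((Sᴴ * S) *ᵥ w) = ∑ k, (Complex.normSq ((S *ᵥ w) k) : ℂ) := by
  rw [← Matrix.mulVec_mulVec, Matrix.dotProduct_mulVec, ← Matrix.star_mulVec]
  simp [dotProduct, Complex.star_def, Complex.normSq_eq_conj_mul_self]

lemma kron_one_quad' {X Y : Type*} [Fintype X] [DecidableEq X] [Fintype Y]
    (σ : Matrix Y Y ℂ) (v : X × Y → ℂ) :
    star v ⬝ᵥ ((kron 1 σ) *ᵥ v) = ∑ i, star (fun j => v (i, j)) ⬝ᵥ (σ *ᵥ (fun j => v (i, j))) := by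
  simp only [dotProduct, Matrix.mulVec, kron, Matrix.one_apply, Fintype.sum_prod_type,
    Pi.star_apply, ite_mul, one_mul, zero_mul, Finset.sum_ite_irrel, Finset.sum_const_zero,
    Finset.sum_ite_eq, Finset.mem_univ, if_true, Finset.mul_sum]

lemma ptrFst_decomp' {X Y : Type*} [Fintype X] [Fintype Y]
    (B : Matrix (X × Y) (X × Y) ℂ) :
    ptrFst (Bᴴ * B) = ∑ m, (Matrix.of fun k j => B k (m, j))ᴴ *
      (Matrix.of fun k j => B k (m, j) : Matrix (X × Y) Y ℂ) := by
  ext j j'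
  simp [ptrFst, Matrix.mul_apply, Matrix.conjTranspose_apply, Matrix.sum_apply]

lemma dot_sum_mulVec' {X Y : Type*} [Fintype X] [Fintype Y] (w : Y → ℂ) (M : X → Matrix Y Y ℂ) :
    star w ⬝ᵥ ((∑ m, M m) *ᵥ w) = ∑ m, star w ⬝ᵥ (M m *ᵥ w) := by
  simp only [Matrix.mulVec, dotProduct, Matrix.sum_apply, Finset.sum_mul,
    Finset.mul_sum, Pi.star_apply]
  trans ∑ x : Y, ∑ i : X, ∑ x1 : Y, star (w x) * (M i x x1 * w x1)
  · exact Finset.sum_congr rfl fun x _ => Finset.sum_comm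
  · exact Finset.sum_comm

lemma quadQ' {X Y : Type*} [Fintype X] [DecidableEq X] [Fintype Y] [DecidableEq Y]
    (B : Matrix (X × Y) (X × Y) ℂ) (v : X × Y → ℂ) :
    (star v ⬝ᵥ ((Bᴴ * B) *ᵥ v)).re ≤
      (Fintype.card X : ℝ) * (star v ⬝ᵥ ((kron 1 (ptrFst (Bᴴ * B))) *ᵥ v)).re := by
  set S : X → Matrix (X × Y) Y ℂ := fun m => Matrix.of fun k j => B k (m, j) with hS
  set vv : X → Y → ℂ := fun i j => v (i, j) with hvv
  have hBv : B *ᵥ v = ∑ i, S i *ᵥ vv i := by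
    funext k
    simp [Matrix.mulVec, dotProduct, hS, hvv, Fintype.sum_prod_type,
      Finset.sum_apply]
  have hL : (star v ⬝ᵥ ((Bᴴ * B) *ᵥ v)).re = ∑ k, Complex.normSq ((∑ i, S i *ᵥ vv i) k) := by
    rw [quad_eq', hBv, Complex.re_sum]
    simp
  have hR : (star v ⬝ᵥ ((kron 1 (ptrFst (Bᴴ * B))) *ᵥ v)).re =
      ∑ i, ∑ m, ∑ k, Complex.normSq ((S m *ᵥ vv i) k) := by
    rw [kron_one_quad', ptrFst_decomp']
    have : ∀ i, star (vv i) ⬝ᵥ ((∑ m, (S m)ᴴ * S m) *ᵥ vv i) =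
        ∑ m, ∑ k, (Complex.normSq ((S m *ᵥ vv i) k) : ℂ) := by
      intro i
      rw [dot_sum_mulVec']
      exact Finset.sum_congr rfl fun m _ => quad_eq' (S m) (vv i)
    simp only [this, Complex.re_sum]
    exact Finset.sum_congr rfl fun i _ => by rw [this i, Complex.re_sum]; simp
  rw [hL, hR]
  calc ∑ k, Complex.normSq ((∑ i, S i *ᵥ vv i) k)
      ≤ ∑ k, ((Fintype.card X : ℝ) * ∑ i, Complex.normSq ((S i *ᵥ vv i) k)) := by
        apply Finset.sum_le_sum
        intro k _
        simpa using normSq_sum_le' (fun i => (S i *ᵥ vv i) k)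
    _ = (Fintype.card X : ℝ) * ∑ i, ∑ k, Complex.normSq ((S i *ᵥ vv i) k) := by
        rw [← Finset.mul_sum, Finset.sum_comm]
    _ ≤ (Fintype.card X : ℝ) * ∑ i, ∑ m, ∑ k, Complex.normSq ((S m *ᵥ vv i) k) := by
        apply mul_le_mul_of_nonneg_left _ (by positivity)
        apply Finset.sum_le_sum
        intro i _
        exact Finset.single_le_sum
          (f := fun m => ∑ k, Complex.normSq ((S m *ᵥ vv i) k))
          (fun m _ => Finset.sum_nonneg fun k _ => Complex.normSq_nonneg _)
          (Finset.mem_univ i)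

lemma trace_kron' {X Y : Type*} [Fintype X] [DecidableEq X] [Fintype Y] [DecidableEq Y]
    (ρ : Matrix (X × Y) (X × Y) ℂ) (hρ : ρ.IsHermitian) :
    (ρ * kron 1 (ptrFst ρ)).trace.re = frob (ptrFst ρ) ^ 2 := by
  set σ := ptrFst ρ with hσdef
  have hσ : ∀ j j', σ j' j = starRingEnd ℂ (σ j j') := by
    intro j j'
    simp only [hσdef, ptrFst, map_sum]
    refine Finset.sum_congr rfl fun i _ => ?_
    conv_lhs => rw [← hρ]
    simp [Matrix.conjTranspose_apply]
  have h1 : (ρ * kron 1 σ).trace = ∑ j, ∑ j', σ j j' * σ j' j := by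
    simp only [Matrix.trace, Matrix.diag, Matrix.mul_apply, kron, Matrix.one_apply,
      Fintype.sum_prod_type, ite_mul, one_mul, zero_mul, mul_ite, mul_zero,
      Finset.sum_ite_irrel, Finset.sum_const_zero, Finset.sum_ite_eq', Finset.mem_univ,
      if_true]
    rw [Finset.sum_comm]
    refine Finset.sum_congr rfl fun j _ => ?_
    trans ∑ j', (∑ i, ρ (i, j) (i, j')) * σ j' j
    · rw [Finset.sum_comm]
      exact Finset.sum_congr rfl fun j' _ => (Finset.sum_mul _ _ _).symm
    · exact Finset.sum_congr rfl fun j' _ => rfl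
  rw [h1, frob_sq']
  rw [Finset.sum_comm]
  rw [Complex.re_sum]
  refine Finset.sum_congr rfl fun j _ => ?_
  rw [Complex.re_sum]
  refine Finset.sum_congr rfl fun j' _ => ?_
  rw [hσ j' j]
  rw [Complex.mul_conj]
  simp

/-- Dimension bounds for the squared Frobenius norm of a partial trace of a PSD matrix:
`|X|⁻¹ ‖ρ^Y‖₂² ≤ ‖ρ^{XY}‖₂² ≤ |X| ‖ρ^Y‖₂²`. -/
theorem frob_ptrace_bounds {X Y : Type*} [Fintype X] [DecidableEq X] [Fintype Y] [DecidableEq Y]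
    (ρ : Matrix (X × Y) (X × Y) ℂ) (hρ : ρ.PosSemidef) :
    (Fintype.card X : ℝ)⁻¹ * frob (ptrFst ρ) ^ 2 ≤ frob ρ ^ 2 ∧
      frob ρ ^ 2 ≤ (Fintype.card X : ℝ) * frob (ptrFst ρ) ^ 2 := by
  constructor
  · -- lower bound
    rcases Nat.eq_zero_or_pos (Fintype.card X) with h0 | hpos
    · rw [h0]
      simp only [Nat.cast_zero, _root_.inv_zero, zero_mul]
      rw [frob_sq' ρ]
      exact Finset.sum_nonneg fun z _ => Finset.sum_nonneg fun w _ => Complex.normSq_nonneg _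
    · rw [inv_mul_le_iff₀ (by exact_mod_cast hpos)]
      rw [frob_sq', frob_sq']
      calc ∑ z, ∑ w, Complex.normSq (ptrFst ρ w z)
          ≤ ∑ z : Y, ∑ w : Y, (Fintype.card X : ℝ) * ∑ i, Complex.normSq (ρ (i, w) (i, z)) := by
            refine Finset.sum_le_sum fun z _ => Finset.sum_le_sum fun w _ => ?_
            simpa [ptrFst] using normSq_sum_le' (fun i => ρ (i, w) (i, z))
        _ = (Fintype.card X : ℝ) * ∑ z : Y, ∑ w : Y, ∑ i, Complex.normSq (ρ (i, w) (i, z)) := by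
            simp [Finset.mul_sum]
        _ ≤ (Fintype.card X : ℝ) * ∑ z, ∑ w, Complex.normSq (ρ w z) := by
            apply mul_le_mul_of_nonneg_left _ (by positivity)
            rw [Fintype.sum_prod_type]
            rw [Finset.sum_comm (γ := X) (s := Finset.univ) (t := Finset.univ)]
            refine Finset.sum_le_sum fun z _ => ?_
            -- goal: ∑ w:Y, ∑ i:X, normSq (ρ (i,w) (i,z)) ≤ ∑ i':X, ∑ w':X×Y, normSq (ρ w' (i',z))
            rw [Finset.sum_comm]
            calc ∑ i : X, ∑ w : Y, Complex.normSq (ρ (i, w) (i, z))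
                ≤ ∑ i : X, ∑ i' : X, ∑ w : Y, Complex.normSq (ρ (i, w) (i', z)) := by
                  refine Finset.sum_le_sum fun i _ => ?_
                  exact Finset.single_le_sum
                    (f := fun i' => ∑ w : Y, Complex.normSq (ρ (i, w) (i', z)))
                    (fun i' _ => Finset.sum_nonneg fun w _ => Complex.normSq_nonneg _)
                    (Finset.mem_univ i)
              _ = ∑ i' : X, ∑ w' : X × Y, Complex.normSq (ρ w' (i', z)) := by
                  rw [Finset.sum_comm]
                  exact Finset.sum_congr rfl fun i' _ => by
                    rw [Fintype.sum_prod_type]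
  · -- upper bound
    obtain ⟨B, rfl⟩ : ∃ B : Matrix (X × Y) (X × Y) ℂ, ρ = Bᴴ * B := by
      open scoped MatrixOrder Matrix.Norms.L2Operator in
      exact CStarAlgebra.nonneg_iff_eq_star_mul_self.mp hρ.nonneg
    have herm : (Bᴴ * B)ᴴ = Bᴴ * B := (posSemidef_conjTranspose_mul_self B).1
    have hfr : frob (Bᴴ * B) ^ 2 = ((Bᴴ * B) * (Bᴴ * B)).trace.re := by
      rw [frob, Real.sq_sqrt, herm]
      rw [trace_re']
      exact Finset.sum_nonneg fun z _ => Finset.sum_nonneg fun w _ => Complex.normSq_nonneg _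
    rw [hfr]
    calc ((Bᴴ * B) * (Bᴴ * B)).trace.re
        = ∑ k, (star (star (B k)) ⬝ᵥ ((Bᴴ * B) *ᵥ star (B k))).re := by
          rw [traceT', Complex.re_sum]
      _ ≤ ∑ k, (Fintype.card X : ℝ) *
            (star (star (B k)) ⬝ᵥ ((kron 1 (ptrFst (Bᴴ * B))) *ᵥ star (B k))).re := by
          exact Finset.sum_le_sum fun k _ => quadQ' B (star (B k))
      _ = (Fintype.card X : ℝ) * ((Bᴴ * B) * kron 1 (ptrFst (Bᴴ * B))).trace.re := by
          rw [traceT', Complex.re_sum, Finset.mul_sum]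
      _ = (Fintype.card X : ℝ) * frob (ptrFst (Bᴴ * B)) ^ 2 := by
          rw [trace_kron' _ herm]
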